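/- Let K_n = (V,E) be the complete graph on n ≥ 2 vertices, and let ρ : E → {red, green} be an edge coloring such that at least |E|/3 edges are colored red and at least |E|/3 edges are colored green. Then there exist at least n/100 vertices v ∈ V such that at least n/100 edges incident to v are colored red and at least n/100 edges incident to v are colored green. -/

import Mathlib

open Finset

lemma Ecard {n : ℕ} : 2 * ((univ : Finset (Sym2 (Fin n))).filter (fun e => ¬ e.IsDiag)).card
    = n * (n - 1) := by
  have h1 : ((univ : Finset (Sym2 (Fin n))).filter (fun e => ¬ e.IsDiag)).card
      = Fintype.card { a : Sym2 (Fin n) // ¬a.IsDiag } := by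
    rw [Fintype.card_subtype]
  rw [h1, Sym2.card_subtype_not_diag, Fintype.card_fin, Nat.choose_two_right,
    Nat.mul_div_cancel' (Nat.even_mul_pred_self n).two_dvd]

lemma color_bound (n : ℕ) (hn : 101 ≤ n) (ρ : Sym2 (Fin n) → Bool)
    (E : Finset (Sym2 (Fin n))) (hE : E = Finset.univ.filter (fun e => ¬ e.IsDiag))
    (hred : E.card ≤ 3 * (E.filter (fun e => ρ e = true)).card) :
    9 * (Finset.univ.filter (fun v : Fin n =>
      100 * (E.filter (fun e => v ∈ e ∧ ρ e = true)).card < n)).card + 5 * n ≤ 9 * n := by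
  set dR : Fin n → ℕ := fun v => (E.filter (fun e => v ∈ e ∧ ρ e = true)).card with hdR
  set P : Finset (Fin n) := Finset.univ.filter (fun v => 100 * dR v < n) with hP
  set S : Finset (Fin n) := Finset.univ.filter (fun v => ¬ 100 * dR v < n) with hS
  set Red : Finset (Sym2 (Fin n)) := E.filter (fun e => ρ e = true) with hRed
  set T : Finset (Sym2 (Fin n)) := E.filter (fun e => ρ e = true ∧ ∀ w ∈ e, w ∈ S) with hT
  have hEnd : ∀ e ∈ E, ¬ e.IsDiag := by
    intro e he; rw [hE, mem_filter] at he; exact he.2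
  have hsplit : Red ⊆ (P.biUnion (fun v => Red.filter (fun e => v ∈ e))) ∪ T := by
    intro e he
    by_cases hall : ∀ w ∈ e, w ∈ S
    · refine mem_union_right _ ?_
      rw [hT, mem_filter]
      rw [hRed, mem_filter] at he
      exact ⟨he.1, he.2, hall⟩
    · push_neg at hall
      obtain ⟨w, hw, hwS⟩ := hall
      refine mem_union_left _ (mem_biUnion.mpr ⟨w, ?_, mem_filter.mpr ⟨he, hw⟩⟩)
      rw [hP, mem_filter]
      rw [hS, mem_filter] at hwS
      refine ⟨mem_univ w, ?_⟩
      by_contra h; exact hwS ⟨mem_univ w, h⟩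
  have hRedle : Red.card ≤ (∑ v ∈ P, dR v) + T.card := by
    calc Red.card ≤ ((P.biUnion (fun v => Red.filter (fun e => v ∈ e))) ∪ T).card :=
          card_le_card hsplit
      _ ≤ (P.biUnion (fun v => Red.filter (fun e => v ∈ e))).card + T.card := card_union_le _ _
      _ ≤ (∑ v ∈ P, (Red.filter (fun e => v ∈ e)).card) + T.card :=
          Nat.add_le_add_right (card_biUnion_le) _
      _ = (∑ v ∈ P, dR v) + T.card := by
          congr 1
          refine Finset.sum_congr rfl (fun v _ => ?_)
          rw [hRed, filter_filter, hdR]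
          congr 1
          apply filter_congr
          intro e _
          tauto
  have hPsum : ∀ v ∈ P, 100 * dR v ≤ n - 1 := by
    intro v hv; rw [hP, mem_filter] at hv; omega
  have hPsum' : 100 * (∑ v ∈ P, dR v) ≤ P.card * (n - 1) := by
    rw [Finset.mul_sum]
    calc ∑ v ∈ P, 100 * dR v ≤ ∑ v ∈ P, (n - 1) := Finset.sum_le_sum hPsum
      _ = P.card * (n - 1) := by rw [Finset.sum_const, smul_eq_mul]
  have hTsub : T ⊆ S.offDiag.image Sym2.mk.uncurry := by
    intro e he
    rw [hT, mem_filter] at he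
    obtain ⟨heE, _, hall⟩ := he
    have hnd := hEnd e heE
    induction e using Sym2.ind with
    | _ a b =>
      rw [Sym2.mk_isDiag_iff] at hnd
      exact mem_image.mpr ⟨(a, b), Finset.mem_offDiag.mpr
        ⟨hall a (by simp), hall b (by simp), hnd⟩, rfl⟩
  have hTcard : 2 * T.card ≤ S.card * (S.card - 1) := by
    calc 2 * T.card ≤ 2 * (S.offDiag.image Sym2.mk.uncurry).card :=
          Nat.mul_le_mul_left _ (card_le_card hTsub)
      _ = 2 * (S.card.choose 2) := by rw [Sym2.card_image_offDiag]
      _ = S.card * (S.card - 1) := by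
          rw [Nat.choose_two_right, Nat.mul_div_cancel' (Nat.even_mul_pred_self S.card).two_dvd]
  have hEc : 2 * E.card = n * (n - 1) := by rw [hE]; exact Ecard
  have hPS : P.card + S.card = n := by
    rw [hP, hS, Finset.card_filter_add_card_filter_not]
    simp
  show 9 * P.card + 5 * n ≤ 9 * n
  obtain ⟨m, rfl⟩ : ∃ m, n = m + 1 := ⟨n - 1, by omega⟩
  set p := P.card
  set x := S.card
  have key : 100 * ((m + 1) * m) ≤ 6 * (p * m) + 300 * (x * x) := by
    have hm1 : m + 1 - 1 = m := rfl
    rw [hm1] at hPsum' hEc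
    have hxx : x * (x - 1) <= x * x := Nat.mul_le_mul_left x (Nat.sub_le x 1)
    have h2 : 2 * T.card ≤ x * x := le_trans hTcard hxx
    linarith [hRedle, hPsum', h2, hEc, hred]
  by_contra hcon
  push_neg at hcon
  have hxm : 9 * x ≤ 5 * m + 4 := by omega
  have hm : 100 ≤ m := by omega
  have hsq : (9 * x) * (9 * x) ≤ (5 * m + 4) * (5 * m + 4) := Nat.mul_le_mul hxm hxm
  have hmm : 100 * m ≤ m * m := Nat.mul_le_mul_right m hm
  have hpm : p * m ≤ (m + 1) * m := Nat.mul_le_mul_right m (by omega)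
  nlinarith [key, hsq, hmm, hpm]


lemma exists_bichrom (n : ℕ) (hn : 2 ≤ n) (ρ : Sym2 (Fin n) → Bool)
    (E : Finset (Sym2 (Fin n))) (hE : E = Finset.univ.filter (fun e => ¬ e.IsDiag))
    (hred : E.card ≤ 3 * (E.filter (fun e => ρ e = true)).card)
    (hgreen : E.card ≤ 3 * (E.filter (fun e => ρ e = false)).card) :
    ∃ v : Fin n, 1 ≤ (E.filter (fun e => v ∈ e ∧ ρ e = true)).card ∧
      1 ≤ (E.filter (fun e => v ∈ e ∧ ρ e = false)).card := by
  have hmemE : ∀ a b : Fin n, a ≠ b → s(a, b) ∈ E := by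
    intro a b hab
    rw [hE, mem_filter, Sym2.mk_isDiag_iff]
    exact ⟨mem_univ _, hab⟩
  have h01 : (⟨0, by omega⟩ : Fin n) ≠ ⟨1, by omega⟩ := by
    simp [Fin.ext_iff]
  have hE1 : 1 ≤ E.card := card_pos.mpr ⟨_, hmemE _ _ h01⟩
  have hRne : ∃ e, e ∈ E.filter (fun e => ρ e = true) := by
    have : 1 ≤ (E.filter (fun e => ρ e = true)).card := by omega
    exact card_pos.mp this
  have hGne : ∃ e, e ∈ E.filter (fun e => ρ e = false) := by
    have : 1 ≤ (E.filter (fun e => ρ e = false)).card := by omega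
    exact card_pos.mp this
  obtain ⟨a, b, hab⟩ := Sym2.exists.mp hRne
  obtain ⟨c, d, hcd⟩ := Sym2.exists.mp hGne
  rw [mem_filter] at hab hcd
  have hndab : a ≠ b := by
    have := hab.1; rw [hE, mem_filter, Sym2.mk_isDiag_iff] at this; exact this.2
  have hndcd : c ≠ d := by
    have := hcd.1; rw [hE, mem_filter, Sym2.mk_isDiag_iff] at this; exact this.2
  -- helper to conclude
  have mk : ∀ v : Fin n, ∀ e1 e2, e1 ∈ E → e2 ∈ E → v ∈ e1 → v ∈ e2 →
      ρ e1 = true → ρ e2 = false →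
      ∃ v : Fin n, 1 ≤ (E.filter (fun e => v ∈ e ∧ ρ e = true)).card ∧
      1 ≤ (E.filter (fun e => v ∈ e ∧ ρ e = false)).card := by
    intro v e1 e2 h1 h2 hv1 hv2 hc1 hc2
    exact ⟨v, card_pos.mpr ⟨e1, mem_filter.mpr ⟨h1, hv1, hc1⟩⟩,
      card_pos.mpr ⟨e2, mem_filter.mpr ⟨h2, hv2, hc2⟩⟩⟩
  by_cases hac : a = c
  · exact mk a _ _ hab.1 hcd.1 (Sym2.mem_mk_left a b) (hac ▸ Sym2.mem_mk_left c d)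
      hab.2 hcd.2
  by_cases had : a = d
  · exact mk a _ _ hab.1 hcd.1 (Sym2.mem_mk_left a b) (had ▸ Sym2.mem_mk_right c d)
      hab.2 hcd.2
  -- a ∉ {c,d}; use edge s(a,c)
  have he' : s(a, c) ∈ E := hmemE a c hac
  cases hρ : ρ s(a, c) with
  | true => exact mk c _ _ he' hcd.1 (Sym2.mem_mk_right a c) (Sym2.mem_mk_left c d) hρ hcd.2
  | false => exact mk a _ _ hab.1 he' (Sym2.mem_mk_left a b) (Sym2.mem_mk_left a c) hab.2 hρ

/-- if a 2-coloring (`true` = red, `false` = green) of the edges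
of the complete graph on `n ≥ 2` vertices colors at least `|E|/3` edges red and
at least `|E|/3` edges green, then there are at least `n/100` vertices `v` with
at least `n/100` red edges incident to `v` and at least `n/100` green edges
incident to `v`. -/
theorem many_bichromatic_vertices (n : ℕ) (hn : 2 ≤ n)
    (ρ : Sym2 (Fin n) → Bool)
    (E : Finset (Sym2 (Fin n)))
    (hE : E = Finset.univ.filter (fun e => ¬ e.IsDiag))
    (hred : E.card ≤ 3 * (E.filter (fun e => ρ e = true)).card)
    (hgreen : E.card ≤ 3 * (E.filter (fun e => ρ e = false)).card) :
    n ≤ 100 * (Finset.univ.filter (fun v : Fin n =>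
      n ≤ 100 * (E.filter (fun e => v ∈ e ∧ ρ e = true)).card ∧
      n ≤ 100 * (E.filter (fun e => v ∈ e ∧ ρ e = false)).card)).card := by
  classical
  set B := Finset.univ.filter (fun v : Fin n =>
      n ≤ 100 * (E.filter (fun e => v ∈ e ∧ ρ e = true)).card ∧
      n ≤ 100 * (E.filter (fun e => v ∈ e ∧ ρ e = false)).card) with hB
  by_cases hsmall : n ≤ 100
  · obtain ⟨v, hv1, hv2⟩ := exists_bichrom n hn ρ E hE hred hgreen
    have hvB : v ∈ B := by
      rw [hB, Finset.mem_filter]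
      exact ⟨Finset.mem_univ v, by omega, by omega⟩
    have : 1 ≤ B.card := Finset.card_pos.mpr ⟨v, hvB⟩
    omega
  · have hn' : 101 ≤ n := by omega
    have cb1 := color_bound n hn' ρ E hE hred
    have hred' : E.card ≤ 3 * (E.filter (fun e => (!ρ e) = true)).card := by
      simpa only [Bool.not_eq_true'] using hgreen
    have cb2 := color_bound n hn' (fun e => !ρ e) E hE hred'
    simp only [Bool.not_eq_true'] at cb2
    set P := Finset.univ.filter (fun v : Fin n =>
      100 * (E.filter (fun e => v ∈ e ∧ ρ e = true)).card < n) with hP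
    set Q := Finset.univ.filter (fun v : Fin n =>
      100 * (E.filter (fun e => v ∈ e ∧ ρ e = false)).card < n) with hQ
    have hcover : (Finset.univ : Finset (Fin n)) ⊆ P ∪ Q ∪ B := by
      intro v _
      by_cases h1 : v ∈ P
      · exact Finset.mem_union_left _ (Finset.mem_union_left _ h1)
      by_cases h2 : v ∈ Q
      · exact Finset.mem_union_left _ (Finset.mem_union_right _ h2)
      refine Finset.mem_union_right _ ?_
      rw [hP, Finset.mem_filter] at h1
      rw [hQ, Finset.mem_filter] at h2
      rw [hB, Finset.mem_filter]
      refine ⟨Finset.mem_univ v, ?_, ?_⟩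
      · by_contra h; exact h1 ⟨Finset.mem_univ v, by omega⟩
      · by_contra h; exact h2 ⟨Finset.mem_univ v, by omega⟩
    have hcard : n ≤ P.card + Q.card + B.card := by
      calc n = (Finset.univ : Finset (Fin n)).card := by simp
        _ ≤ (P ∪ Q ∪ B).card := Finset.card_le_card hcover
        _ ≤ (P ∪ Q).card + B.card := Finset.card_union_le _ _
        _ ≤ P.card + Q.card + B.card := Nat.add_le_add_right (Finset.card_union_le _ _) _
    omega
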